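/- arXiv:1801.09338 — 3 statements merged into one kernel-verified Lean document; each statement's English description precedes it below -/
import Mathlib

section
/- With Y = Wθ + Uα + e, Σ* = U(Ω⁻¹+Δ_ν)⁻¹Uᵀ + R, Ω* = (Ω⁻¹+Δ_ν)⁻¹, θ̃ = (WᵀΣ*⁻¹W + Δ_β)⁻¹WᵀΣ*⁻¹Y and α̃ = Ω*UᵀΣ*⁻¹(Y − Wθ̃), the predictor Ã = lᵀθ̃ + dᵀα̃ of A = lᵀθ + dᵀα has bias E[Ã − A] = −lᵀ(WᵀΣ*⁻¹W+Δ_β)⁻¹Δ_β θ + dᵀΩ*UᵀΣ*⁻¹W(WᵀΣ*⁻¹W+Δ_β)⁻¹Δ_β θ. -/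
open Matrix MeasureTheory ProbabilityTheory

/-- bias of the naive predictor Ã = lᵀθ̃ + dᵀα̃ of the mixed effect A. -/
theorem naive_predictor_bias
    {N p q : ℕ}
    (W : Matrix (Fin N) (Fin p) ℝ) (U : Matrix (Fin N) (Fin q) ℝ)
    (θ : Fin p → ℝ) (l : Fin p → ℝ) (d : Fin q → ℝ)
    (Ωm : Matrix (Fin q) (Fin q) ℝ) (R : Matrix (Fin N) (Fin N) ℝ)
    (Δβ : Matrix (Fin p) (Fin p) ℝ) (Δν : Matrix (Fin q) (Fin q) ℝ)
    (hW : W.rank = p) (hΩ : Ωm.PosDef) (hR : R.PosDef)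
    (hΔβ : Δβ.PosSemidef) (hΔν : Δν.PosSemidef)
    {Zs : Type*} [MeasurableSpace Zs] (μ : Measure Zs) [IsProbabilityMeasure μ]
    (α : Zs → Fin q → ℝ) (e : Zs → Fin N → ℝ)
    (hmα : Measurable α) (hme : Measurable e)
    (hindep : IndepFun α e μ)
    (hαint : ∀ i, Integrable (fun ω => α ω i) μ)
    (heint : ∀ i, Integrable (fun ω => e ω i) μ)
    (hα0 : ∀ i, ∫ ω, α ω i ∂μ = 0)
    (he0 : ∀ i, ∫ ω, e ω i ∂μ = 0)
    (Ωstar : Matrix (Fin q) (Fin q) ℝ) (hΩstar : Ωstar = (Ωm⁻¹ + Δν)⁻¹)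
    (Sstar : Matrix (Fin N) (Fin N) ℝ)
    (hSstar : Sstar = U * (Ωm⁻¹ + Δν)⁻¹ * Uᵀ + R)
    (Y : Zs → Fin N → ℝ)
    (hY : ∀ ω, Y ω = W.mulVec θ + U.mulVec (α ω) + e ω)
    (θt : Zs → Fin p → ℝ)
    (hθt : ∀ ω, θt ω = ((Wᵀ * Sstar⁻¹ * W + Δβ)⁻¹ * Wᵀ * Sstar⁻¹).mulVec (Y ω))
    (αt : Zs → Fin q → ℝ)
    (hαt : ∀ ω, αt ω = (Ωstar * Uᵀ * Sstar⁻¹).mulVec (Y ω - W.mulVec (θt ω))) :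
    (∫ ω, ((l ⬝ᵥ θt ω + d ⬝ᵥ αt ω) - (l ⬝ᵥ θ + d ⬝ᵥ α ω)) ∂μ) =
      -(l ⬝ᵥ (((Wᵀ * Sstar⁻¹ * W + Δβ)⁻¹ * Δβ).mulVec θ))
      + d ⬝ᵥ ((Ωstar * Uᵀ * Sstar⁻¹ * W * (Wᵀ * Sstar⁻¹ * W + Δβ)⁻¹ * Δβ).mulVec θ) := by
  -- W has injective mulVec
  have hWinj : Function.Injective W.mulVec := by
    have hker : LinearMap.ker W.mulVecLin = ⊥ := by
      have h2 := LinearMap.finrank_range_add_finrank_ker W.mulVecLin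
      rw [Module.finrank_pi, Fintype.card_fin] at h2
      have h3 : Module.finrank ℝ (LinearMap.range W.mulVecLin) = p := hW
      rw [h3] at h2
      exact Submodule.finrank_eq_zero.mp (by omega)
    exact LinearMap.ker_eq_bot.mp hker
  -- Sstar is positive definite
  have hOD : (Ωm⁻¹ + Δν).PosDef := hΩ.inv.add_posSemidef hΔν
  have hS : Sstar.PosDef := by
    rw [hSstar]
    have h1 := hOD.inv.posSemidef.mul_mul_conjTranspose_same U
    rw [conjTranspose_eq_transpose_of_trivial] at h1
    exact Matrix.PosDef.posSemidef_add h1 hR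
  have hSinv : Sstar⁻¹.PosDef := hS.inv
  -- WᵀSstar⁻¹W is positive definite
  have hWtSW : (Wᵀ * Sstar⁻¹ * W).PosDef := by
    refine Matrix.PosDef.of_dotProduct_mulVec_pos ?_ (fun x hx => ?_)
    · have := isHermitian_conjTranspose_mul_mul W hSinv.isHermitian
      rwa [conjTranspose_eq_transpose_of_trivial] at this
    · have hWx : W.mulVec x ≠ 0 := fun h => hx (hWinj (by simpa using h))
      have h := hSinv.dotProduct_mulVec_pos hWx
      simpa [star_trivial, ← mulVec_mulVec, dotProduct_mulVec, vecMul_transpose,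
        dotProduct_mulVec (W.mulVec x)] using h
  set B : Matrix (Fin p) (Fin p) ℝ := Wᵀ * Sstar⁻¹ * W + Δβ with hB
  have hBpd : B.PosDef := hWtSW.add_posSemidef hΔβ
  have hBdet : IsUnit B.det := hBpd.det_pos.ne'.isUnit
  have hBinvB : B⁻¹ * B = 1 := nonsing_inv_mul B hBdet
  set K : Matrix (Fin p) (Fin N) ℝ := B⁻¹ * Wᵀ * Sstar⁻¹ with hK
  set L : Matrix (Fin q) (Fin N) ℝ := Ωstar * Uᵀ * Sstar⁻¹ with hL
  set P : Matrix (Fin q) (Fin N) ℝ := L * (1 - W * K) with hP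
  have hKW : K * W = 1 - B⁻¹ * Δβ := by
    have h1 : K * W = B⁻¹ * (Wᵀ * Sstar⁻¹ * W) := by
      rw [hK]; simp only [Matrix.mul_assoc]
    have h2 : Wᵀ * Sstar⁻¹ * W = B - Δβ := by rw [hB, add_sub_cancel_right]
    rw [h1, h2, Matrix.mul_sub, hBinvB]
  have e1 : (1 - W * K) * W = W * (B⁻¹ * Δβ) := by
    rw [Matrix.sub_mul, Matrix.one_mul, Matrix.mul_assoc, hKW, Matrix.mul_sub,
      Matrix.mul_one, sub_sub_cancel]
  have hPW : P * W = L * (W * (B⁻¹ * Δβ)) := by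
    rw [hP, Matrix.mul_assoc, e1]
  -- affine decomposition of the integrand
  set u : Fin N → ℝ := K.vecMul l + P.vecMul d with hu
  set c : ℝ := u ⬝ᵥ W.mulVec θ - l ⬝ᵥ θ with hc
  set f : Fin q → ℝ := U.vecMul u - d with hf
  have key : ∀ ω, (l ⬝ᵥ θt ω + d ⬝ᵥ αt ω) - (l ⬝ᵥ θ + d ⬝ᵥ α ω)
      = c + (f ⬝ᵥ α ω + u ⬝ᵥ e ω) := by
    intro ω
    have h2 : αt ω = P.mulVec (Y ω) := by
      rw [hαt ω, hθt ω, Matrix.mulVec_mulVec,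
        show Y ω - (W * K).mulVec (Y ω) = ((1 : Matrix (Fin N) (Fin N) ℝ) - W * K).mulVec (Y ω)
          by rw [Matrix.sub_mulVec, Matrix.one_mulVec],
        Matrix.mulVec_mulVec, ← hP]
    rw [hθt ω, h2, hY ω, hc, hf, hu]
    simp only [mulVec_add, dotProduct_add, add_dotProduct, sub_dotProduct,
      dotProduct_mulVec, vecMul_vecMul, Matrix.add_vecMul, Matrix.sub_vecMul]
    ring
  -- integrability of the linear parts
  have hintα : Integrable (fun ω => f ⬝ᵥ α ω) μ := by
    simp only [dotProduct]
    exact integrable_finset_sum _ fun i _ => (hαint i).const_mul (f i)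
  have hinte : Integrable (fun ω => u ⬝ᵥ e ω) μ := by
    simp only [dotProduct]
    exact integrable_finset_sum _ fun i _ => (heint i).const_mul (u i)
  have hIα : ∫ ω, f ⬝ᵥ α ω ∂μ = 0 := by
    simp only [dotProduct]
    rw [integral_finset_sum _ fun i _ => (hαint i).const_mul (f i)]
    simp [integral_const_mul, hα0]
  have hIe : ∫ ω, u ⬝ᵥ e ω ∂μ = 0 := by
    simp only [dotProduct]
    rw [integral_finset_sum _ fun i _ => (heint i).const_mul (u i)]
    simp [integral_const_mul, he0]
  have hInt : (∫ ω, ((l ⬝ᵥ θt ω + d ⬝ᵥ αt ω) - (l ⬝ᵥ θ + d ⬝ᵥ α ω)) ∂μ) = c := by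
    rw [show (fun ω => (l ⬝ᵥ θt ω + d ⬝ᵥ αt ω) - (l ⬝ᵥ θ + d ⬝ᵥ α ω))
        = fun ω => c + (f ⬝ᵥ α ω + u ⬝ᵥ e ω) from funext key]
    have h4 : ∫ ω, c + (f ⬝ᵥ α ω + u ⬝ᵥ e ω) ∂μ
        = (∫ _ω, c ∂μ) + ∫ ω, (f ⬝ᵥ α ω + u ⬝ᵥ e ω) ∂μ :=
      integral_add (integrable_const c) (hintα.add hinte)
    have h5 : ∫ ω, (f ⬝ᵥ α ω + u ⬝ᵥ e ω) ∂μ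
        = (∫ ω, f ⬝ᵥ α ω ∂μ) + ∫ ω, u ⬝ᵥ e ω ∂μ := integral_add hintα hinte
    rw [h4, h5, hIα, hIe, integral_const]
    simp
  rw [hInt]
  -- the constant c equals the claimed bias
  have hcval : c = l ⬝ᵥ ((K * W).mulVec θ) + d ⬝ᵥ ((P * W).mulVec θ) - l ⬝ᵥ θ := by
    rw [hc, hu]
    simp only [add_dotProduct, dotProduct_mulVec, vecMul_vecMul, Matrix.add_vecMul]
  rw [hcval, hKW, hPW, Matrix.sub_mulVec, Matrix.one_mulVec, dotProduct_sub]
  simp only [Matrix.mul_assoc]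
  ring
end

section
/- Define the bias-corrected predictor Ã_c = lᵀθ̃ + dᵀα̃ + lᵀ(WᵀΣ*⁻¹W+Δ_β)⁻¹Δ_β θ̃ − dᵀΩ*UᵀΣ*⁻¹W(WᵀΣ*⁻¹W+Δ_β)⁻¹Δ_β θ̃. Then its bias satisfies E[Ã_c − A] = −lᵀ(WᵀΣ*⁻¹W+Δ_β)⁻¹Δ_β(WᵀΣ*⁻¹W+Δ_β)⁻¹Δ_β θ + dᵀΩ*UᵀΣ*⁻¹W(WᵀΣ*⁻¹W+Δ_β)⁻¹Δ_β(WᵀΣ*⁻¹W+Δ_β)⁻¹Δ_β θ; i.e., the bias equals the correction matrix (WᵀΣ*⁻¹W+Δ_β)⁻¹Δ_β applied twice. -/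
open Matrix MeasureTheory ProbabilityTheory

lemma posDef_transpose_mul_mul {N p : ℕ} (W : Matrix (Fin N) (Fin p) ℝ)
    (S : Matrix (Fin N) (Fin N) ℝ) (hS : S.PosDef)
    (hinj : Function.Injective W.mulVec) : (Wᵀ * S * W).PosDef := by
  have hH : (Wᵀ * S * W).IsHermitian := by
    have := Matrix.isHermitian_conjTranspose_mul_mul W hS.1
    rwa [W.conjTranspose_eq_transpose_of_trivial] at this
  refine Matrix.PosDef.of_dotProduct_mulVec_pos hH fun x hx => ?_
  have hWx : W.mulVec x ≠ 0 := by
    intro h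
    exact hx (hinj (by simpa using h))
  have h2 := hS.dotProduct_mulVec_pos hWx
  have h3 : star x ⬝ᵥ (Wᵀ * S * W) *ᵥ x = star (W *ᵥ x) ⬝ᵥ S *ᵥ (W *ᵥ x) := by
    simp [← Matrix.mulVec_mulVec, Matrix.dotProduct_mulVec x, Matrix.vecMul_transpose]
  rw [h3]
  exact h2

/-- bias of the bias-corrected predictor Ã_c. -/
theorem bias_corrected_predictor_bias
    {N p q : ℕ}
    (W : Matrix (Fin N) (Fin p) ℝ) (U : Matrix (Fin N) (Fin q) ℝ)
    (θ : Fin p → ℝ) (l : Fin p → ℝ) (d : Fin q → ℝ)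
    (Ωm : Matrix (Fin q) (Fin q) ℝ) (R : Matrix (Fin N) (Fin N) ℝ)
    (Δβ : Matrix (Fin p) (Fin p) ℝ) (Δν : Matrix (Fin q) (Fin q) ℝ)
    (hW : W.rank = p) (hΩ : Ωm.PosDef) (hR : R.PosDef)
    (hΔβ : Δβ.PosSemidef) (hΔν : Δν.PosSemidef)
    {Zs : Type*} [MeasurableSpace Zs] (μ : Measure Zs) [IsProbabilityMeasure μ]
    (α : Zs → Fin q → ℝ) (e : Zs → Fin N → ℝ)
    (hmα : Measurable α) (hme : Measurable e)
    (hindep : IndepFun α e μ)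
    (hαint : ∀ i, Integrable (fun ω => α ω i) μ)
    (heint : ∀ i, Integrable (fun ω => e ω i) μ)
    (hα0 : ∀ i, ∫ ω, α ω i ∂μ = 0)
    (he0 : ∀ i, ∫ ω, e ω i ∂μ = 0)
    (Ωstar : Matrix (Fin q) (Fin q) ℝ) (hΩstar : Ωstar = (Ωm⁻¹ + Δν)⁻¹)
    (Sstar : Matrix (Fin N) (Fin N) ℝ)
    (hSstar : Sstar = U * (Ωm⁻¹ + Δν)⁻¹ * Uᵀ + R)
    (Y : Zs → Fin N → ℝ)
    (hY : ∀ ω, Y ω = W.mulVec θ + U.mulVec (α ω) + e ω)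
    (θt : Zs → Fin p → ℝ)
    (hθt : ∀ ω, θt ω = ((Wᵀ * Sstar⁻¹ * W + Δβ)⁻¹ * Wᵀ * Sstar⁻¹).mulVec (Y ω))
    (αt : Zs → Fin q → ℝ)
    (hαt : ∀ ω, αt ω = (Ωstar * Uᵀ * Sstar⁻¹).mulVec (Y ω - W.mulVec (θt ω)))
    (Ac : Zs → ℝ)
    (hAc : ∀ ω, Ac ω =
      l ⬝ᵥ θt ω + d ⬝ᵥ αt ω
      + l ⬝ᵥ (((Wᵀ * Sstar⁻¹ * W + Δβ)⁻¹ * Δβ).mulVec (θt ω))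
      - d ⬝ᵥ ((Ωstar * Uᵀ * Sstar⁻¹ * W * (Wᵀ * Sstar⁻¹ * W + Δβ)⁻¹ * Δβ).mulVec (θt ω))) :
    (∫ ω, (Ac ω - (l ⬝ᵥ θ + d ⬝ᵥ α ω)) ∂μ) =
      -(l ⬝ᵥ (((Wᵀ * Sstar⁻¹ * W + Δβ)⁻¹ * Δβ
          * (Wᵀ * Sstar⁻¹ * W + Δβ)⁻¹ * Δβ).mulVec θ))
      + d ⬝ᵥ ((Ωstar * Uᵀ * Sstar⁻¹ * W * (Wᵀ * Sstar⁻¹ * W + Δβ)⁻¹ * Δβ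
          * (Wᵀ * Sstar⁻¹ * W + Δβ)⁻¹ * Δβ).mulVec θ) := by
  classical
  -- positive definiteness / invertibility facts
  have hΩinv : (Ωm⁻¹ + Δν).PosDef := hΩ.inv.add_posSemidef hΔν
  have hΩsinv : ((Ωm⁻¹ + Δν)⁻¹).PosDef := hΩinv.inv
  have hSpd : Sstar.PosDef := by
    rw [hSstar]
    have h1 : (U * (Ωm⁻¹ + Δν)⁻¹ * Uᵀ).PosSemidef := by
      have := hΩsinv.posSemidef.mul_mul_conjTranspose_same U
      rwa [U.conjTranspose_eq_transpose_of_trivial] at this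
    exact Matrix.PosDef.posSemidef_add h1 hR
  have hSinvpd : (Sstar⁻¹).PosDef := hSpd.inv
  have hWinj : Function.Injective W.mulVec := by
    rw [Matrix.mulVec_injective_iff]
    have h1 : Wᵀ.rank = p := by rw [Matrix.rank_transpose, hW]
    rw [Matrix.rank_eq_finrank_span_row] at h1
    rw [linearIndependent_iff_card_eq_finrank_span]
    rw [Fintype.card_fin]
    convert h1.symm using 1
    rfl
  have hMpd : (Wᵀ * Sstar⁻¹ * W + Δβ).PosDef :=
    (posDef_transpose_mul_mul W _ hSinvpd hWinj).add_posSemidef hΔβ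
  set M : Matrix (Fin p) (Fin p) ℝ := Wᵀ * Sstar⁻¹ * W + Δβ with hMdef
  have hMinv : M⁻¹ * M = 1 := Matrix.nonsing_inv_mul _ hMpd.det_pos.ne'.isUnit
  set G : Matrix (Fin p) (Fin N) ℝ := M⁻¹ * Wᵀ * Sstar⁻¹ with hGdef
  set H : Matrix (Fin q) (Fin N) ℝ := Ωstar * Uᵀ * Sstar⁻¹ with hHdef
  have hGW : G * W = 1 - M⁻¹ * Δβ := by
    have h1 : Wᵀ * (Sstar⁻¹ * W) = M - Δβ := by rw [hMdef, ← Matrix.mul_assoc]; abel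
    calc G * W = M⁻¹ * (Wᵀ * (Sstar⁻¹ * W)) := by rw [hGdef]; simp only [Matrix.mul_assoc]
    _ = M⁻¹ * M - M⁻¹ * Δβ := by rw [h1, mul_sub]
    _ = 1 - M⁻¹ * Δβ := by rw [hMinv]
  set φ : Fin N → ℝ :=
    l ᵥ* G + d ᵥ* H - d ᵥ* (H * W * G) + l ᵥ* (M⁻¹ * Δβ * G)
      - d ᵥ* (H * W * M⁻¹ * Δβ * G) with hφdef
  have hAcφ : ∀ ω, Ac ω = φ ⬝ᵥ Y ω := by
    intro ω
    rw [hAc ω, hαt ω, hθt ω, hφdef]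
    simp [Matrix.mulVec_mulVec, Matrix.mulVec_sub, dotProduct_sub,
      add_dotProduct, sub_dotProduct, Matrix.dotProduct_mulVec,
      Matrix.vecMul_vecMul, Matrix.mul_assoc]
    ring
  have hsplit : ∀ ω, Ac ω - (l ⬝ᵥ θ + d ⬝ᵥ α ω)
      = (φ ⬝ᵥ W.mulVec θ - l ⬝ᵥ θ) + ((φ ᵥ* U - d) ⬝ᵥ α ω + φ ⬝ᵥ e ω) := by
    intro ω
    rw [hAcφ ω, hY ω]
    simp [dotProduct_add, sub_dotProduct, Matrix.dotProduct_mulVec]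
    ring
  have hint1 : Integrable (fun ω => (φ ᵥ* U - d) ⬝ᵥ α ω) μ := by
    simp only [dotProduct]
    exact integrable_finset_sum _ fun i _ => (hαint i).const_mul _
  have hint2 : Integrable (fun ω => φ ⬝ᵥ e ω) μ := by
    simp only [dotProduct]
    exact integrable_finset_sum _ fun i _ => (heint i).const_mul _
  have hI1 : (∫ ω, (φ ᵥ* U - d) ⬝ᵥ α ω ∂μ) = 0 := by
    simp only [dotProduct]
    rw [integral_finset_sum _ fun i _ => (hαint i).const_mul _]
    simp [integral_const_mul, hα0]
  have hI2 : (∫ ω, φ ⬝ᵥ e ω ∂μ) = 0 := by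
    simp only [dotProduct]
    rw [integral_finset_sum _ fun i _ => (heint i).const_mul _]
    simp [integral_const_mul, he0]
  have hInt : (∫ ω, (Ac ω - (l ⬝ᵥ θ + d ⬝ᵥ α ω)) ∂μ) = φ ⬝ᵥ W.mulVec θ - l ⬝ᵥ θ := by
    have h4 : (fun ω => Ac ω - (l ⬝ᵥ θ + d ⬝ᵥ α ω))
        = fun ω => (φ ⬝ᵥ W.mulVec θ - l ⬝ᵥ θ) + ((φ ᵥ* U - d) ⬝ᵥ α ω + φ ⬝ᵥ e ω) :=
      funext hsplit
    calc (∫ ω, (Ac ω - (l ⬝ᵥ θ + d ⬝ᵥ α ω)) ∂μ)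
        = ∫ ω, ((φ ⬝ᵥ W.mulVec θ - l ⬝ᵥ θ) + ((φ ᵥ* U - d) ⬝ᵥ α ω + φ ⬝ᵥ e ω)) ∂μ := by
          rw [h4]
      _ = (∫ _ω, (φ ⬝ᵥ W.mulVec θ - l ⬝ᵥ θ) ∂μ)
          + ∫ ω, ((φ ᵥ* U - d) ⬝ᵥ α ω + φ ⬝ᵥ e ω) ∂μ :=
          integral_add (integrable_const _) (hint1.add hint2)
      _ = (∫ _ω, (φ ⬝ᵥ W.mulVec θ - l ⬝ᵥ θ) ∂μ)
          + ((∫ ω, (φ ᵥ* U - d) ⬝ᵥ α ω ∂μ) + ∫ ω, φ ⬝ᵥ e ω ∂μ) := by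
          rw [integral_add hint1 hint2]
      _ = φ ⬝ᵥ W.mulVec θ - l ⬝ᵥ θ := by
          rw [hI1, hI2, integral_const]
          simp
  rw [hInt]
  -- now the matrix algebra
  have hφW : φ ᵥ* W = l - l ᵥ* (M⁻¹ * Δβ * (M⁻¹ * Δβ))
      + d ᵥ* (H * W * (M⁻¹ * Δβ * (M⁻¹ * Δβ))) := by
    rw [hφdef]
    simp only [Matrix.sub_vecMul, Matrix.add_vecMul, Matrix.vecMul_vecMul,
      Matrix.mul_assoc, hGW, Matrix.mul_sub, Matrix.mul_one, Matrix.vecMul_sub,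
      Matrix.vecMul_add, Matrix.vecMul_one]
    abel
  rw [Matrix.dotProduct_mulVec, hφW, Matrix.dotProduct_mulVec l, Matrix.dotProduct_mulVec d]
  simp only [sub_dotProduct, add_dotProduct, Matrix.vecMul_vecMul,
    Matrix.mul_assoc]
  ring
end

section
/- Joint minimization: given Y, the pair (θ̃, α̃) with θ̃ = (WᵀΣ*⁻¹W+Δ_β)⁻¹WᵀΣ*⁻¹Y and α̃ = Ω*UᵀΣ*⁻¹(Y − Wθ̃), where Σ* = UΩ*Uᵀ + R and Ω* = (Ω⁻¹+Δ_ν)⁻¹, is the unique minimizer of ℓ(θ,α) = (Y−Wθ−Uα)ᵀR⁻¹(Y−Wθ−Uα) + αᵀΩ⁻¹α + θᵀΔ_βθ + αᵀΔ_να over (θ,α) ∈ ℝᵖ×ℝ^q. -/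
open Matrix

private lemma dot_swap {n m : ℕ} (A : Matrix (Fin n) (Fin m) ℝ) (x : Fin m → ℝ) (y : Fin n → ℝ) :
    A.mulVec x ⬝ᵥ y = x ⬝ᵥ Aᵀ.mulVec y := by
  rw [dotProduct_mulVec, vecMul_transpose, dotProduct_comm]

private lemma dot_symm {n : ℕ} {A : Matrix (Fin n) (Fin n) ℝ} (hA : Aᵀ = A) (x y : Fin n → ℝ) :
    x ⬝ᵥ A.mulVec y = y ⬝ᵥ A.mulVec x := by
  conv_lhs => rw [← hA]
  rw [← dot_swap, dotProduct_comm]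

private lemma quad_add {n : ℕ} {A : Matrix (Fin n) (Fin n) ℝ} (hA : Aᵀ = A) (x y : Fin n → ℝ) :
    (x + y) ⬝ᵥ A.mulVec (x + y)
      = x ⬝ᵥ A.mulVec x + 2 * (y ⬝ᵥ A.mulVec x) + y ⬝ᵥ A.mulVec y := by
  rw [mulVec_add, dotProduct_add, add_dotProduct, add_dotProduct, dot_symm hA x y]; ring

private lemma quad_sub {n : ℕ} {A : Matrix (Fin n) (Fin n) ℝ} (hA : Aᵀ = A) (x y : Fin n → ℝ) :
    (x - y) ⬝ᵥ A.mulVec (x - y)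
      = x ⬝ᵥ A.mulVec x - 2 * (y ⬝ᵥ A.mulVec x) + y ⬝ᵥ A.mulVec y := by
  rw [mulVec_sub, dotProduct_sub, sub_dotProduct, sub_dotProduct, dot_symm hA x y]; ring

private lemma full_rank_inj {N p : ℕ} (W : Matrix (Fin N) (Fin p) ℝ) (hW : W.rank = p) :
    Function.Injective W.mulVec := by
  have h := W.mulVecLin.finrank_range_add_finrank_ker
  rw [show Module.finrank ℝ (LinearMap.range W.mulVecLin) = p from hW,
    Module.finrank_pi, Fintype.card_fin] at h
  have hk : Module.finrank ℝ (LinearMap.ker W.mulVecLin) = 0 := by omega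
  exact LinearMap.ker_eq_bot.mp (Submodule.finrank_eq_zero.mp hk)

/-- (θ̃, α̃) is the unique joint minimizer of the penalized objective. -/
theorem joint_minimizer
    {N p q : ℕ}
    (W : Matrix (Fin N) (Fin p) ℝ) (hW : W.rank = p)
    (U : Matrix (Fin N) (Fin q) ℝ)
    (R : Matrix (Fin N) (Fin N) ℝ) (Ωm : Matrix (Fin q) (Fin q) ℝ)
    (hR : R.PosDef) (hΩ : Ωm.PosDef)
    (Δβ : Matrix (Fin p) (Fin p) ℝ) (Δν : Matrix (Fin q) (Fin q) ℝ)
    (hΔβ : Δβ.PosSemidef) (hΔν : Δν.PosSemidef)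
    (Ωstar : Matrix (Fin q) (Fin q) ℝ) (hΩstar : Ωstar = (Ωm⁻¹ + Δν)⁻¹)
    (Sstar : Matrix (Fin N) (Fin N) ℝ) (hSstar : Sstar = U * Ωstar * Uᵀ + R)
    (hK : IsUnit (Wᵀ * Sstar⁻¹ * W + Δβ))
    (Y : Fin N → ℝ)
    (ℓ : (Fin p → ℝ) → (Fin q → ℝ) → ℝ)
    (hℓ : ∀ t a, ℓ t a =
      (Y - W.mulVec t - U.mulVec a) ⬝ᵥ (R⁻¹.mulVec (Y - W.mulVec t - U.mulVec a))
      + a ⬝ᵥ (Ωm⁻¹.mulVec a) + t ⬝ᵥ (Δβ.mulVec t) + a ⬝ᵥ (Δν.mulVec a))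
    (θt : Fin p → ℝ)
    (hθt : θt = ((Wᵀ * Sstar⁻¹ * W + Δβ)⁻¹ * Wᵀ * Sstar⁻¹).mulVec Y)
    (αt : Fin q → ℝ)
    (hαt : αt = (Ωstar * Uᵀ * Sstar⁻¹).mulVec (Y - W.mulVec θt)) :
    ∀ (t : Fin p → ℝ) (a : Fin q → ℝ), (t, a) ≠ (θt, αt) → ℓ θt αt < ℓ t a := by
  -- positive definiteness facts
  have hM : (Ωm⁻¹ + Δν).PosDef := hΩ.inv.add_posSemidef hΔν
  have hΩstarPD : Ωstar.PosDef := hΩstar ▸ hM.inv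
  have hS : Sstar.PosDef := by
    rw [hSstar]
    exact Matrix.PosDef.posSemidef_add
      (by simpa using hΩstarPD.posSemidef.mul_mul_conjTranspose_same U) hR
  have hSinv : Sstar * Sstar⁻¹ = 1 := mul_nonsing_inv _ (isUnit_iff_ne_zero.mpr hS.det_pos.ne')
  have hRinvR : R⁻¹ * R = 1 := nonsing_inv_mul _ (isUnit_iff_ne_zero.mpr hR.det_pos.ne')
  have hMΩ : (Ωm⁻¹ + Δν) * Ωstar = 1 := by
    rw [hΩstar]; exact mul_nonsing_inv _ (isUnit_iff_ne_zero.mpr hM.det_pos.ne')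
  have hKinv : (Wᵀ * Sstar⁻¹ * W + Δβ) * (Wᵀ * Sstar⁻¹ * W + Δβ)⁻¹ = 1 :=
    mul_nonsing_inv _ ((isUnit_iff_isUnit_det _).mp hK)
  -- symmetry facts
  have hRsym : (R⁻¹)ᵀ = R⁻¹ := by simpa using hR.inv.isHermitian.eq
  have hOsym : (Ωm⁻¹)ᵀ = Ωm⁻¹ := by simpa using hΩ.inv.isHermitian.eq
  have hBsym : Δβᵀ = Δβ := by simpa using hΔβ.isHermitian.eq
  have hNsym : Δνᵀ = Δν := by simpa using hΔν.isHermitian.eq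
  -- residual identities
  set estar : Fin N → ℝ := Y - W.mulVec θt - U.mulVec αt with hestar
  have hres : estar = (R * Sstar⁻¹).mulVec (Y - W.mulVec θt) := by
    have h1 : R * Sstar⁻¹ = 1 - U * Ωstar * Uᵀ * Sstar⁻¹ := by
      rw [eq_sub_iff_add_eq, ← add_mul, add_comm, ← hSstar, hSinv]
    rw [hestar, hαt, h1, sub_mulVec, one_mulVec, mulVec_mulVec,
      show U * (Ωstar * Uᵀ * Sstar⁻¹) = U * Ωstar * Uᵀ * Sstar⁻¹ by simp only [Matrix.mul_assoc]]
  have hRinve : R⁻¹.mulVec estar = Sstar⁻¹.mulVec (Y - W.mulVec θt) := by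
    rw [hres, mulVec_mulVec, ← mul_assoc, hRinvR, one_mul]
  -- stationarity
  have hKθ : (Wᵀ * Sstar⁻¹ * W + Δβ).mulVec θt = (Wᵀ * Sstar⁻¹).mulVec Y := by
    rw [hθt, mulVec_mulVec,
      show (Wᵀ * Sstar⁻¹ * W + Δβ) * ((Wᵀ * Sstar⁻¹ * W + Δβ)⁻¹ * Wᵀ * Sstar⁻¹)
        = ((Wᵀ * Sstar⁻¹ * W + Δβ) * (Wᵀ * Sstar⁻¹ * W + Δβ)⁻¹) * Wᵀ * Sstar⁻¹ by
          simp only [Matrix.mul_assoc],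
      hKinv, Matrix.one_mul]
  have key1 : Wᵀ.mulVec (R⁻¹.mulVec estar) = Δβ.mulVec θt := by
    have e1 : (Wᵀ * Sstar⁻¹ * W).mulVec θt + Δβ.mulVec θt = (Wᵀ * Sstar⁻¹).mulVec Y := by
      rw [← add_mulVec, hKθ]
    rw [hRinve, mulVec_mulVec, mulVec_sub, mulVec_mulVec, ← e1]
    abel
  have key2 : Uᵀ.mulVec (R⁻¹.mulVec estar) = (Ωm⁻¹ + Δν).mulVec αt := by
    rw [hRinve, hαt, mulVec_mulVec, mulVec_mulVec,
      show (Ωm⁻¹ + Δν) * (Ωstar * Uᵀ * Sstar⁻¹)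
        = ((Ωm⁻¹ + Δν) * Ωstar) * (Uᵀ * Sstar⁻¹) by simp only [Matrix.mul_assoc],
      hMΩ, Matrix.one_mul]
  -- main inequality
  intro t a hne
  set dt : Fin p → ℝ := t - θt with hdt
  set da : Fin q → ℝ := a - αt with hda
  set v : Fin N → ℝ := W.mulVec dt + U.mulVec da with hv
  have hresid : Y - W.mulVec t - U.mulVec a = estar - v := by
    rw [hestar, hv, hdt, hda, mulVec_sub, mulVec_sub]; abel
  have ht' : t = θt + dt := by rw [hdt]; abel
  have ha' : a = αt + da := by rw [hda]; abel
  have hcross : v ⬝ᵥ R⁻¹.mulVec estar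
      = dt ⬝ᵥ Δβ.mulVec θt + (da ⬝ᵥ Ωm⁻¹.mulVec αt + da ⬝ᵥ Δν.mulVec αt) := by
    rw [hv, add_dotProduct, dot_swap, dot_swap, key1, key2, add_mulVec, dotProduct_add]
  have hdiff : ℓ t a = ℓ θt αt
      + (v ⬝ᵥ R⁻¹.mulVec v + da ⬝ᵥ Ωm⁻¹.mulVec da
        + dt ⬝ᵥ Δβ.mulVec dt + da ⬝ᵥ Δν.mulVec da) := by
    rw [hℓ t a, hℓ θt αt, hresid, ← hestar]
    rw [ht', ha']
    rw [quad_sub hRsym, quad_add hOsym, quad_add hBsym, quad_add hNsym, hcross]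
    ring
  -- positivity
  have h1 : 0 ≤ v ⬝ᵥ R⁻¹.mulVec v := by simpa using hR.inv.posSemidef.dotProduct_mulVec_nonneg v
  have h2 : 0 ≤ da ⬝ᵥ Ωm⁻¹.mulVec da := by simpa using hΩ.inv.posSemidef.dotProduct_mulVec_nonneg da
  have h3 : 0 ≤ dt ⬝ᵥ Δβ.mulVec dt := by simpa using hΔβ.dotProduct_mulVec_nonneg dt
  have h4 : 0 ≤ da ⬝ᵥ Δν.mulVec da := by simpa using hΔν.dotProduct_mulVec_nonneg da
  have hpos : 0 < v ⬝ᵥ R⁻¹.mulVec v + da ⬝ᵥ Ωm⁻¹.mulVec da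
      + dt ⬝ᵥ Δβ.mulVec dt + da ⬝ᵥ Δν.mulVec da := by
    by_cases hda0 : da = 0
    · have hdt0 : dt ≠ 0 := by
        intro h0
        apply hne
        rw [ht', h0, add_zero, ha', hda0, add_zero]
      have hv0 : v ≠ 0 := by
        rw [hv, hda0, mulVec_zero, add_zero]
        intro h0
        exact hdt0 (full_rank_inj W hW (by rw [h0, mulVec_zero]))
      have := hR.inv.dotProduct_mulVec_pos hv0
      simp only [star_trivial] at this
      linarith
    · have := hΩ.inv.dotProduct_mulVec_pos hda0
      simp only [star_trivial] at this
      linarith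
  linarith [hdiff]
end
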